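/- Let G be a finite connected simple graph and let e be an edge of G whose edge-degree is minimum among all edges of G. Then the vertex of the edge-set graph Γ_G corresponding to the singleton subset {e} has degree equal to the minimum degree δ(Γ_G). -/

import Mathlib

open scoped Classical
open Finset

/-- Two edges (as elements of `Sym2 V`) are *adjacent* if they are distinct and
share a common endpoint. -/
def EdgeAdj {V : Type*} (e f : Sym2 V) : Prop := e ≠ f ∧ ∃ v, v ∈ e ∧ v ∈ f

lemma EdgeAdj.symm {V : Type*} {e f : Sym2 V} (h : EdgeAdj e f) : EdgeAdj f e :=
  ⟨h.1.symm, h.2.elim fun v hv => ⟨v, hv.2, hv.1⟩⟩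

/-- The *edge-set graph* of a simple graph `G`: its vertices are the nonempty
(finite) subsets of the edge set of `G`, two distinct such subsets being adjacent
if and only if some edge in the first is adjacent to some edge in the second. -/
def edgeSetGraph {V : Type*} (G : SimpleGraph V) :
    SimpleGraph {S : Finset (Sym2 V) // ↑S ⊆ G.edgeSet ∧ S.Nonempty} where
  Adj A B := A ≠ B ∧ ∃ e ∈ A.1, ∃ f ∈ B.1, EdgeAdj e f
  symm := ⟨by
    rintro A B ⟨hAB, e, he, f, hf, hef⟩
    exact ⟨hAB.symm, f, hf, e, he, hef.symm⟩⟩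
  loopless := ⟨by rintro A ⟨h, -⟩; exact h rfl⟩

/-- The *edge-degree* of an edge `e` of `G`: the number of edges of `G` adjacent
to `e` (for `e = uv ∈ E(G)` this equals `d_G(u) + d_G(v) - 2`). -/
noncomputable def edgeDegree {V : Type*} [Fintype V] (G : SimpleGraph V) (e : Sym2 V) : ℕ :=
  (G.edgeFinset.filter (fun f => EdgeAdj e f)).card

section Aux
variable {V : Type*} [Fintype V]

/-- edges of `G` adjacent to some edge of `S` -/
noncomputable def nbrs (G : SimpleGraph V) (S : Finset (Sym2 V)) : Finset (Sym2 V) :=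
  G.edgeFinset.filter (fun f => ∃ e ∈ S, EdgeAdj e f)

lemma nbrs_singleton (G : SimpleGraph V) (f : Sym2 V) :
    (nbrs G {f}).card = edgeDegree G f := by
  simp [nbrs, edgeDegree]

lemma nbrs_subset (G : SimpleGraph V) (S : Finset (Sym2 V)) :
    nbrs G S ⊆ G.edgeFinset := Finset.filter_subset _ _

lemma nbrs_mono (G : SimpleGraph V) {S T : Finset (Sym2 V)} (h : S ⊆ T) :
    nbrs G S ⊆ nbrs G T := by
  intro g hg
  simp only [nbrs, mem_filter] at hg ⊢
  obtain ⟨h1, e, he, h2⟩ := hg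
  exact ⟨h1, e, h he, h2⟩

lemma degree_eq (G : SimpleGraph V)
    (A : {S : Finset (Sym2 V) // ↑S ⊆ G.edgeSet ∧ S.Nonempty}) :
    (edgeSetGraph G).degree A =
      ((G.edgeFinset.powerset.filter (fun T => (T ∩ nbrs G A.1).Nonempty)).erase A.1).card := by
  rw [← SimpleGraph.card_neighborFinset_eq_degree,
      ← Finset.card_image_of_injective _ Subtype.val_injective]
  congr 1
  ext T
  simp only [Finset.mem_image, SimpleGraph.mem_neighborFinset, Finset.mem_erase,
    Finset.mem_filter, Finset.mem_powerset]
  constructor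
  · rintro ⟨B, ⟨hne, e', he', f, hfB, hef⟩, rfl⟩
    refine ⟨fun h => hne (Subtype.ext h.symm), fun g hg => SimpleGraph.mem_edgeFinset.2 (B.2.1 hg), f, Finset.mem_inter.2 ⟨hfB, ?_⟩⟩
    exact Finset.mem_filter.2 ⟨SimpleGraph.mem_edgeFinset.2 (B.2.1 hfB), e', he', hef⟩
  · rintro ⟨hne, hsub, f, hf⟩
    have hfT := (Finset.mem_inter.1 hf).1
    have hfN := (Finset.mem_inter.1 hf).2
    obtain ⟨hfE, e', he', hef⟩ := Finset.mem_filter.1 hfN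
    refine ⟨⟨T, fun g hg => SimpleGraph.mem_edgeFinset.1 (hsub hg), ⟨f, hfT⟩⟩,
      ⟨fun h => hne (congrArg Subtype.val h).symm, e', he', f, hfT, hef⟩, rfl⟩

lemma card_filter_meets (G : SimpleGraph V) (N : Finset (Sym2 V)) (hN : N ⊆ G.edgeFinset) :
    (G.edgeFinset.powerset.filter (fun T => (T ∩ N).Nonempty)).card =
      2 ^ G.edgeFinset.card - 2 ^ (G.edgeFinset.card - N.card) := by
  have h1 : (G.edgeFinset.powerset.filter (fun T => ¬(T ∩ N).Nonempty)) =
      (G.edgeFinset \ N).powerset := by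
    ext T
    simp only [mem_filter, mem_powerset, Finset.not_nonempty_iff_eq_empty,
      Finset.subset_sdiff, ← Finset.disjoint_iff_inter_eq_empty]
  have h2 := Finset.card_filter_add_card_filter_not
    (s := G.edgeFinset.powerset) (p := fun T => (T ∩ N).Nonempty)
  rw [h1, card_powerset, card_powerset, card_sdiff_of_subset hN] at h2
  have h3 : 2 ^ (G.edgeFinset.card - N.card) ≤ 2 ^ G.edgeFinset.card :=
    Nat.pow_le_pow_right (by norm_num) (Nat.sub_le _ _)
  omega

end Aux

/-- If `e` is an edge of a finite connected simple graph `G` whose edge-degree is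
minimum among all edges of `G`, then the vertex of the edge-set graph `Γ_G`
corresponding to the singleton `{e}` has degree `δ(Γ_G)`. -/
theorem stmt_14 {V : Type*} [Fintype V] (G : SimpleGraph V) (hconn : G.Connected)
    (e : Sym2 V) (he : e ∈ G.edgeSet)
    (hmin : ∀ f ∈ G.edgeSet, edgeDegree G e ≤ edgeDegree G f) :
    (edgeSetGraph G).degree ⟨{e}, by simpa using he, Finset.singleton_nonempty e⟩ =
      (edgeSetGraph G).minDegree := by
  classical
  set m := G.edgeFinset.card with hm
  set d := edgeDegree G e with hd
  set A₀ : {S : Finset (Sym2 V) // ↑S ⊆ G.edgeSet ∧ S.Nonempty} :=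
    ⟨{e}, by simpa using he, Finset.singleton_nonempty e⟩ with hA₀def
  have heE : e ∈ G.edgeFinset := SimpleGraph.mem_edgeFinset.2 he
  have henn : e ∉ nbrs G ({e} : Finset (Sym2 V)) := by
    intro h
    obtain ⟨-, x, hx, hadj⟩ := Finset.mem_filter.1 h
    rw [Finset.mem_singleton] at hx; subst hx
    exact hadj.1 rfl
  have hcard_e : (nbrs G ({e} : Finset (Sym2 V))).card = d := nbrs_singleton G e
  have hdm : d + 1 ≤ m := by
    have hsub : nbrs G ({e} : Finset (Sym2 V)) ⊆ G.edgeFinset.erase e := by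
      intro g hg
      exact Finset.mem_erase.2 ⟨fun h => henn (h ▸ hg), Finset.filter_subset _ _ hg⟩
    have h1 := Finset.card_le_card hsub
    rw [hcard_e, Finset.card_erase_of_mem heE] at h1
    have hm1 : 1 ≤ m := Finset.card_pos.2 ⟨e, heE⟩
    omega
  have hdegA₀ : (edgeSetGraph G).degree A₀ = 2 ^ m - 2 ^ (m - d) := by
    rw [degree_eq]
    have hnot : ({e} : Finset (Sym2 V)) ∉
        G.edgeFinset.powerset.filter
          (fun T => (T ∩ nbrs G ({e} : Finset (Sym2 V))).Nonempty) := by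
      intro h
      obtain ⟨-, f, hf⟩ := Finset.mem_filter.1 h
      obtain ⟨hf1, hf2⟩ := Finset.mem_inter.1 hf
      rw [Finset.mem_singleton] at hf1; subst hf1
      exact henn hf2
    rw [Finset.erase_eq_of_notMem hnot,
      card_filter_meets G (nbrs G ({e} : Finset (Sym2 V))) (nbrs_subset G _), hcard_e]
  have hbound : ∀ B : {S : Finset (Sym2 V) // ↑S ⊆ G.edgeSet ∧ S.Nonempty},
      2 ^ m - 2 ^ (m - d) ≤ (edgeSetGraph G).degree B := by
    intro B
    set k := (nbrs G B.1).card with hk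
    have hkm : k ≤ m := Finset.card_le_card (nbrs_subset G _)
    have hdk : d ≤ k := by
      obtain ⟨f, hf⟩ := B.2.2
      have hfe : f ∈ G.edgeSet := B.2.1 hf
      have hsub : nbrs G ({f} : Finset (Sym2 V)) ⊆ nbrs G B.1 :=
        nbrs_mono G (Finset.singleton_subset_iff.2 hf)
      have h1 := Finset.card_le_card hsub
      rw [nbrs_singleton] at h1
      exact le_trans (hmin f hfe) h1
    rw [degree_eq]
    by_cases hmeet : (B.1 ∩ nbrs G B.1).Nonempty
    · obtain ⟨f, hf⟩ := hmeet
      obtain ⟨hfB, hfN⟩ := Finset.mem_inter.1 hf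
      have hfe : f ∈ G.edgeSet := B.2.1 hfB
      have hfnn : f ∉ nbrs G ({f} : Finset (Sym2 V)) := by
        intro h
        obtain ⟨-, x, hx, hadj⟩ := Finset.mem_filter.1 h
        rw [Finset.mem_singleton] at hx; subst hx
        exact hadj.1 rfl
      have hsub : insert f (nbrs G ({f} : Finset (Sym2 V))) ⊆ nbrs G B.1 := by
        intro g hg
        rcases Finset.mem_insert.1 hg with rfl | hg
        · exact hfN
        · exact nbrs_mono G (Finset.singleton_subset_iff.2 hfB) hg
      have hk1 : d + 1 ≤ k := by
        have h1 := Finset.card_le_card hsub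
        rw [Finset.card_insert_of_notMem hfnn, nbrs_singleton] at h1
        have h2 := hmin f hfe
        omega
      have hmem : B.1 ∈ G.edgeFinset.powerset.filter
          (fun T => (T ∩ nbrs G B.1).Nonempty) :=
        Finset.mem_filter.2 ⟨Finset.mem_powerset.2 fun g hg =>
          SimpleGraph.mem_edgeFinset.2 (B.2.1 hg), ⟨f, hf⟩⟩
      rw [Finset.card_erase_of_mem hmem,
        card_filter_meets G (nbrs G B.1) (nbrs_subset G _), ← hk, ← hm]
      have e1 : 2 ^ (m - k) ≤ 2 ^ (m - (d + 1)) :=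
        Nat.pow_le_pow_right (by norm_num) (Nat.sub_le_sub_left hk1 m)
      have e2 : 2 ^ (m - d) = 2 * 2 ^ (m - (d + 1)) := by
        have h3 : m - d = (m - (d + 1)) + 1 := by omega
        rw [h3, pow_succ']
      have e3 : 1 ≤ 2 ^ (m - (d + 1)) := Nat.one_le_two_pow
      have e4 : 2 ^ (m - d) ≤ 2 ^ m := Nat.pow_le_pow_right (by norm_num) (Nat.sub_le _ _)
      omega
    · have hnot : B.1 ∉ G.edgeFinset.powerset.filter
          (fun T => (T ∩ nbrs G B.1).Nonempty) := fun h =>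
        hmeet (Finset.mem_filter.1 h).2
      rw [Finset.erase_eq_of_notMem hnot,
        card_filter_meets G (nbrs G B.1) (nbrs_subset G _), ← hk, ← hm]
      have e1 : 2 ^ (m - k) ≤ 2 ^ (m - d) :=
        Nat.pow_le_pow_right (by norm_num) (Nat.sub_le_sub_left hdk m)
      have e4 : 2 ^ (m - d) ≤ 2 ^ m := Nat.pow_le_pow_right (by norm_num) (Nat.sub_le _ _)
      omega
  haveI : Nonempty {S : Finset (Sym2 V) // ↑S ⊆ G.edgeSet ∧ S.Nonempty} := ⟨A₀⟩
  obtain ⟨B, hB⟩ := (edgeSetGraph G).exists_minimal_degree_vertex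
  refine le_antisymm ?_ (SimpleGraph.minDegree_le_degree _ _)
  rw [hB, hdegA₀]
  exact hbound B
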